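/- Let F and B be n × n column-stochastic matrices, let 0 < α₁, α₂, α₃ < 1, and let d ∈ ℝⁿ. For any initial vector t⁽⁰⁾ ∈ ℝⁿ, the iterative process t⁽ᵏ⁺¹⁾ = α₁ F P₊(t⁽ᵏ⁾) + α₂ B P₋(t⁽ᵏ⁾) + α₃ d converges (in the ℓ¹ norm) to the unique solution t of the RepRank equation t = α₁ F P₊(t) + α₂ B P₋(t) + α₃ d. -/

import Mathlib

open Finset Filter

/-- Replace negative components by zero. -/
def Ppos {n : ℕ} (t : Fin n → ℝ) : Fin n → ℝ := fun i => max (t i) 0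

/-- Replace positive components by zero. -/
def Pneg {n : ℕ} (t : Fin n → ℝ) : Fin n → ℝ := fun i => min (t i) 0

/-- ℓ¹ norm on ℝⁿ. -/
def l1 {n : ℕ} (x : Fin n → ℝ) : ℝ := ∑ i, |x i|

/-- A matrix is column-stochastic if entries are nonnegative and each column sums to 1. -/
def ColStochastic {n : ℕ} (F : Matrix (Fin n) (Fin n) ℝ) : Prop :=
  (∀ i j, 0 ≤ F i j) ∧ ∀ j, ∑ i, F i j = 1

lemma proj_abs (a b : ℝ) : |max a 0 - max b 0| + |min a 0 - min b 0| = |a - b| := by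
  rcases le_total a 0 with ha | ha <;> rcases le_total b 0 with hb | hb
  · rw [max_eq_right ha, max_eq_right hb, min_eq_left ha, min_eq_left hb]; simp
  · rw [max_eq_right ha, max_eq_left hb, min_eq_left ha, min_eq_right hb, zero_sub, sub_zero,
      abs_neg, abs_of_nonneg hb, abs_of_nonpos ha, abs_of_nonpos (by linarith : a - b ≤ 0)]
    ring
  · rw [max_eq_left ha, max_eq_right hb, min_eq_right ha, min_eq_left hb, sub_zero, zero_sub,
      abs_neg, abs_of_nonneg ha, abs_of_nonpos hb, abs_of_nonneg (by linarith : 0 ≤ a - b)]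
    ring
  · rw [max_eq_left ha, max_eq_left hb, min_eq_right ha, min_eq_right hb]; simp

lemma l1_mulVec_le {n : ℕ} {F : Matrix (Fin n) (Fin n) ℝ} (hF : ColStochastic F)
    (v : Fin n → ℝ) : l1 (F.mulVec v) ≤ l1 v := by
  calc l1 (F.mulVec v) = ∑ i, |∑ j, F i j * v j| := rfl
    _ ≤ ∑ i, ∑ j, |F i j * v j| := by
        exact Finset.sum_le_sum fun i _ => Finset.abs_sum_le_sum_abs _ _
    _ = ∑ j, ∑ i, F i j * |v j| := by
        rw [Finset.sum_comm]
        exact Finset.sum_congr rfl fun j _ => Finset.sum_congr rfl fun i _ => by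
          rw [abs_mul, abs_of_nonneg (hF.1 i j)]
    _ = ∑ j, |v j| := Finset.sum_congr rfl fun j _ => by
          rw [← Finset.sum_mul, hF.2 j, one_mul]

theorem repRank_iteration_converges {n : ℕ} (F B : Matrix (Fin n) (Fin n) ℝ)
    (hF : ColStochastic F) (hB : ColStochastic B)
    (α₁ α₂ α₃ : ℝ) (hα₁ : 0 < α₁) (hα₁' : α₁ < 1) (hα₂ : 0 < α₂) (hα₂' : α₂ < 1)
    (hα₃ : 0 < α₃) (hα₃' : α₃ < 1) (d : Fin n → ℝ)
    (u : ℕ → (Fin n → ℝ))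
    (hu : ∀ k, u (k + 1) = α₁ • F.mulVec (Ppos (u k)) + α₂ • B.mulVec (Pneg (u k)) + α₃ • d) :
    ∃ t : Fin n → ℝ,
      (t = α₁ • F.mulVec (Ppos t) + α₂ • B.mulVec (Pneg t) + α₃ • d) ∧
      (∀ t' : Fin n → ℝ,
        t' = α₁ • F.mulVec (Ppos t') + α₂ • B.mulVec (Pneg t') + α₃ • d → t' = t) ∧
      Tendsto (fun k => l1 (u k - t)) atTop (nhds 0) := by
  set E := PiLp 1 (fun _ : Fin n => ℝ)
  have hnorm : ∀ x : E, ‖x‖ = l1 x := by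
    intro x
    rw [PiLp.norm_eq_sum (by norm_num : (0:ℝ) < (1 : ENNReal).toReal)]
    simp [l1, Real.norm_eq_abs]
  set K : ℝ := max α₁ α₂ with hK
  have hK0 : 0 ≤ K := le_trans hα₁.le (le_max_left _ _)
  have hK1 : K < 1 := max_lt hα₁' hα₂'
  set T : E → E := fun t => WithLp.toLp 1 (α₁ • F.mulVec (Ppos t) + α₂ • B.mulVec (Pneg t) + α₃ • d) with hT
  -- key contraction estimate
  have key : ∀ x y : E, l1 ((T x : Fin n → ℝ) - (T y : Fin n → ℝ)) ≤ K * l1 ((x : Fin n → ℝ) - (y : Fin n → ℝ)) := by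
    intro x y
    have hsplit : (T x : Fin n → ℝ) - (T y : Fin n → ℝ) =
        α₁ • F.mulVec (Ppos x - Ppos y) + α₂ • B.mulVec (Pneg x - Pneg y) := by
      show (α₁ • F.mulVec (Ppos x) + α₂ • B.mulVec (Pneg x) + α₃ • d) -
          (α₁ • F.mulVec (Ppos y) + α₂ • B.mulVec (Pneg y) + α₃ • d) = _
      rw [Matrix.mulVec_sub, Matrix.mulVec_sub]
      ext i; simp [Matrix.mulVec]; ring
    have h1 : l1 ((T x : Fin n → ℝ) - (T y : Fin n → ℝ)) ≤
        α₁ * l1 (F.mulVec (Ppos x - Ppos y)) + α₂ * l1 (B.mulVec (Pneg x - Pneg y)) := by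
      rw [hsplit]
      calc l1 (α₁ • F.mulVec (Ppos x - Ppos y) + α₂ • B.mulVec (Pneg x - Pneg y))
          ≤ l1 (α₁ • F.mulVec (Ppos x - Ppos y)) + l1 (α₂ • B.mulVec (Pneg x - Pneg y)) := by
            unfold l1
            rw [← Finset.sum_add_distrib]
            exact Finset.sum_le_sum fun i _ => abs_add_le _ _
        _ = α₁ * l1 (F.mulVec (Ppos x - Ppos y)) + α₂ * l1 (B.mulVec (Pneg x - Pneg y)) := by
            unfold l1
            rw [Finset.mul_sum, Finset.mul_sum]
            congr 1 <;> exact Finset.sum_congr rfl fun i _ => by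
              simp [abs_mul, abs_of_nonneg, hα₁.le, hα₂.le]
    have h2 := l1_mulVec_le hF (Ppos (x : Fin n → ℝ) - Ppos y)
    have h3 := l1_mulVec_le hB (Pneg (x : Fin n → ℝ) - Pneg y)
    have h4 : l1 (Ppos (x : Fin n → ℝ) - Ppos y) + l1 (Pneg (x : Fin n → ℝ) - Pneg y)
        = l1 ((x : Fin n → ℝ) - (y : Fin n → ℝ)) := by
      unfold l1
      rw [← Finset.sum_add_distrib]
      exact Finset.sum_congr rfl fun i _ => proj_abs _ _
    have hl1pos : 0 ≤ l1 (Ppos (x : Fin n → ℝ) - Ppos y) :=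
      Finset.sum_nonneg fun i _ => abs_nonneg _
    have hl1neg : 0 ≤ l1 (Pneg (x : Fin n → ℝ) - Pneg y) :=
      Finset.sum_nonneg fun i _ => abs_nonneg _
    have hle1 : α₁ ≤ K := le_max_left _ _
    have hle2 : α₂ ≤ K := le_max_right _ _
    nlinarith [mul_le_mul_of_nonneg_left h2 hα₁.le, mul_le_mul_of_nonneg_left h3 hα₂.le]
  have hC : ContractingWith ⟨K, hK0⟩ T := by
    constructor
    · exact_mod_cast hK1
    · apply LipschitzWith.of_dist_le_mul
      intro x y
      rw [dist_eq_norm, dist_eq_norm, hnorm, hnorm, WithLp.ofLp_sub, WithLp.ofLp_sub]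
      exact key x y
  set t : E := hC.fixedPoint T with ht
  have hfix : T t = t := hC.fixedPoint_isFixedPt
  refine ⟨WithLp.ofLp t, ?_, ?_, ?_⟩
  · exact congrArg WithLp.ofLp hfix.symm
  · intro t' h'
    exact congrArg WithLp.ofLp (hC.fixedPoint_unique (show Function.IsFixedPt T (WithLp.toLp 1 t') from congrArg (WithLp.toLp 1) h'.symm))
  · have hiter : ∀ k, u k = WithLp.ofLp (T^[k] (WithLp.toLp 1 (u 0))) := by
      intro k
      induction k with
      | zero => simp
      | succ k ih => rw [Function.iterate_succ_apply', hu k, ih] <;> rfl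
    have htend : Tendsto (fun k => T^[k] (WithLp.toLp 1 (u 0))) atTop (nhds t) :=
      hC.tendsto_iterate_fixedPoint (WithLp.toLp 1 (u 0))
    have : Tendsto (fun k => dist (T^[k] (WithLp.toLp 1 (u 0))) t) atTop (nhds 0) :=
      (tendsto_iff_dist_tendsto_zero.mp htend)
    have heq : ∀ k, l1 (u k - WithLp.ofLp t) = dist (T^[k] (WithLp.toLp 1 (u 0))) t := by
      intro k
      rw [hiter k, dist_eq_norm, hnorm, WithLp.ofLp_sub]
    simp only [heq]
    exact this
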